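/- arXiv:0907.2811 — 7 statements merged into one kernel-verified Lean document; each statement's English description precedes it below -/
import Mathlib

section
/- For any normal tropical 3×3 real matrix A (i.e., all diagonal entries equal 0 and all entries ≤ 0), the tropical matrix powers satisfy A^⊙2 = A^⊙3, where tropical matrix multiplication uses (max, +). -/
/-- Tropical (max,+) product of 3×3 real matrices. -/
def tmul (A B : Fin 3 → Fin 3 → ℝ) : Fin 3 → Fin 3 → ℝ :=
  fun i j => max (A i 0 + B 0 j) (max (A i 1 + B 1 j) (A i 2 + B 2 j))

/-- Tropical (max,+) matrix–vector product. -/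
def tvec (A : Fin 3 → Fin 3 → ℝ) (x : Fin 3 → ℝ) : Fin 3 → ℝ :=
  fun i => max (A i 0 + x 0) (max (A i 1 + x 1) (A i 2 + x 2))

/-- A 3×3 real matrix is normal if its diagonal is 0 and all entries are ≤ 0. -/
def IsNormal (A : Fin 3 → Fin 3 → ℝ) : Prop :=
  (∀ i, A i i = 0) ∧ ∀ i j, A i j ≤ 0

/-- The index of `Fin 3` distinct from both `i` and `j` (when `i ≠ j`). -/
def otherIdx (i j : Fin 3) : Fin 3 := ⟨(6 - i.val - j.val) % 3, Nat.mod_lt _ (by norm_num)⟩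

/-- The matrix Ă: zero diagonal, and β_{ij} = a_{ik} + a_{kj} for i ≠ j, k the third index. -/
def breve (A : Fin 3 → Fin 3 → ℝ) : Fin 3 → Fin 3 → ℝ :=
  fun i j => if i = j then 0 else A i (otherIdx i j) + A (otherIdx i j) j

/-- Each term of a tropical product is at most the product entry. -/
lemma tmul_sel (M N : Fin 3 → Fin 3 → ℝ) (i m j : Fin 3) :
    M i m + N m j ≤ tmul M N i j := by
  fin_cases m
  · exact le_max_left _ _
  · exact le_trans (le_max_left _ _) (le_max_right _ _)
  · exact le_trans (le_max_right _ _) (le_max_right _ _)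

theorem stmt0 (A : Fin 3 → Fin 3 → ℝ) (hA : IsNormal A) :
    tmul A A = tmul (tmul A A) A := by
  obtain ⟨hd, hle⟩ := hA
  have T : ∀ i m j, A i m + A m j ≤ tmul A A i j := fun i m j => tmul_sel A A i m j
  have L : ∀ i k l j : Fin 3, (A i k + A k l) + A l j ≤ tmul A A i j := by
    intro i k l j
    by_cases hki : k = i
    · subst hki; linarith [T k l j, hd k]
    by_cases hkl : k = l
    · subst hkl; linarith [T i k j, hd k]
    by_cases hlj : l = j
    · subst hlj; linarith [T i k l, hd l]
    by_cases hli : l = i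
    · subst hli; linarith [T l j j, hd j, hle l k, hle k l]
    have h3 : j = i ∨ j = k := by
      simp only [Fin.ext_iff] at hki hkl hlj hli ⊢
      omega
    rcases h3 with rfl | rfl
    · linarith [T j j j, hd j, hle j k, hle k l, hle l j]
    · linarith [T i j j, hd j, hle j l, hle l j]
  funext i j
  apply le_antisymm
  · have := tmul_sel (tmul A A) A i j j
    linarith [hd j]
  · have H : ∀ l, tmul A A i l + A l j ≤ tmul A A i j := by
      intro l
      rw [show tmul A A i l = max (A i 0 + A 0 l) (max (A i 1 + A 1 l) (A i 2 + A 2 l)) from rfl]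
      rw [← max_add_add_right, ← max_add_add_right]
      exact max_le (L i 0 l j) (max_le (L i 1 l j) (L i 2 l j))
    rw [show tmul (tmul A A) A i j = max (tmul A A i 0 + A 0 j)
      (max (tmul A A i 1 + A 1 j) (tmul A A i 2 + A 2 j)) from rfl]
    exact max_le (H 0) (max_le (H 1) (H 2))
end

section
/- If A is a 3×3 normal tropical real matrix, then A^⊙2 equals the entrywise maximum of A and the matrix Ă, where Ă has zero diagonal and off-diagonal entries β_{ij} = a_{ik} + a_{kj} with {i,j,k} = {1,2,3}. -/
theorem stmt2 (A : Fin 3 → Fin 3 → ℝ) (hA : IsNormal A) :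
    tmul A A = fun i j => max (A i j) (breve A i j) := by
  obtain ⟨hd, hle⟩ := hA
  funext i j
  have h01 := hle 0 1; have h02 := hle 0 2; have h10 := hle 1 0
  have h12 := hle 1 2; have h20 := hle 2 0; have h21 := hle 2 1
  fin_cases i <;> fin_cases j <;>
    simp only [tmul, breve, otherIdx, hd, Fin.mk_zero, Fin.mk_one,
      show ((⟨2, by norm_num⟩ : Fin 3) = 2) from rfl] <;>
    norm_num <;>
    first
      | (constructor <;> linarith)
      | (simp only [max_def] <;> split_ifs <;> first | linarith | omega)
      | linarith
end

section
/- If A is a 3×3 normal tropical real matrix, then each column of A^⊙2 is a fixed point of the map x ↦ A ⊙ x on ℝ³, i.e., A ⊙ col(A^⊙2, j) = col(A^⊙2, j) for j = 1,2,3. -/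
lemma le_tmul (A : Fin 3 → Fin 3 → ℝ) (i j m : Fin 3) :
    A i m + A m j ≤ tmul A A i j := by
  fin_cases m <;> simp only [tmul, Fin.isValue] <;>
    [exact le_max_left _ _;
     exact le_max_of_le_right (le_max_left _ _);
     exact le_max_of_le_right (le_max_right _ _)]

lemma path3 (A : Fin 3 → Fin 3 → ℝ) (hA : IsNormal A) (i k l j : Fin 3) :
    A i k + (A k l + A l j) ≤ tmul A A i j := by
  obtain ⟨h0, hle⟩ := hA
  by_cases hkl : k = l
  · subst hkl; have := le_tmul A i j k; have := h0 k; linarith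
  by_cases hik : i = k
  · subst hik; have := le_tmul A i j l; have := h0 i; linarith
  by_cases hlj : l = j
  · subst hlj; have := le_tmul A i l k; have := h0 l; linarith
  by_cases hil : i = l
  · subst hil; have := le_tmul A i j i; have := h0 i
    have := hle i k; have := hle k i; linarith
  by_cases hkj : k = j
  · subst hkj; have := le_tmul A i k k; have := h0 k
    have := hle k l; have := hle l k; linarith
  · -- i ≠ k, i ≠ l, k ≠ l, l ≠ j, k ≠ j forces i = j
    have hij : i = j := by omega
    subst hij
    have := le_tmul A i i i; have := h0 i
    have := hle i k; have := hle k l; have := hle l i; linarith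

theorem stmt5 (A : Fin 3 → Fin 3 → ℝ) (hA : IsNormal A) (j : Fin 3) :
    tvec A (fun i => tmul A A i j) = fun i => tmul A A i j := by
  funext i
  have h1 : ∀ k, A i k + tmul A A k j ≤ tmul A A i j := by
    intro k
    have p0 := path3 A hA i k 0 j
    have p1 := path3 A hA i k 1 j
    have p2 := path3 A hA i k 2 j
    simp only [tmul] at *
    rcases max_cases (A k 0 + A 0 j) (max (A k 1 + A 1 j) (A k 2 + A 2 j)) with ⟨h,_⟩|⟨h,_⟩ <;>
      rw [h]
    · exact p0
    · rcases max_cases (A k 1 + A 1 j) (A k 2 + A 2 j) with ⟨h',_⟩|⟨h',_⟩ <;> rw [h']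
      · exact p1
      · exact p2
  apply le_antisymm
  · simp only [tvec]
    exact max_le (h1 0) (max_le (h1 1) (h1 2))
  · have : A i i + tmul A A i j ≤ tvec A (fun m => tmul A A m j) i := by
      fin_cases i <;> simp only [tvec, Fin.isValue] <;>
        [exact le_max_left _ _;
         exact le_max_of_le_right (le_max_left _ _);
         exact le_max_of_le_right (le_max_right _ _)]
    have := hA.1 i; linarith
end

section
/- For a 3×3 normal tropical real matrix A, the following are equivalent: (1) Ă ≤ A entrywise; (2) A = A^⊙2. -/
theorem stmt7 (A : Fin 3 → Fin 3 → ℝ) (hA : IsNormal A) :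
    (∀ i j, breve A i j ≤ A i j) ↔ A = tmul A A := by
  obtain ⟨hd, hn⟩ := hA
  constructor
  · intro h
    have h01 : A 0 2 + A 2 1 ≤ A 0 1 := h 0 1
    have h02 : A 0 1 + A 1 2 ≤ A 0 2 := h 0 2
    have h10 : A 1 2 + A 2 0 ≤ A 1 0 := h 1 0
    have h12 : A 1 0 + A 0 2 ≤ A 1 2 := h 1 2
    have h20 : A 2 1 + A 1 0 ≤ A 2 0 := h 2 0
    have h21 : A 2 0 + A 0 1 ≤ A 2 1 := h 2 1
    funext i j
    unfold tmul
    apply le_antisymm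
    · fin_cases i <;> fin_cases j <;> simp [le_max_iff, hd 0, hd 1, hd 2]
    · apply max_le ?_ (max_le ?_ ?_) <;> fin_cases i <;> fin_cases j <;>
        simp <;>
        linarith [hd 0, hd 1, hd 2, hn 0 1, hn 0 2, hn 1 0, hn 1 2, hn 2 0, hn 2 1,
          hn 0 0, hn 1 1, hn 2 2]
  · intro h
    have key : ∀ (i j k : Fin 3), A i k + A k j ≤ tmul A A i j := by
      intro i j k; fin_cases k <;> simp [tmul, le_max_iff]
    intro i j
    by_cases hij : i = j
    · subst hij; simp [breve, hd i]
    · rw [breve, if_neg hij]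
      calc A i (otherIdx i j) + A (otherIdx i j) j ≤ tmul A A i j := key i j _
        _ = A i j := (congrFun (congrFun h i) j).symm
end

section
/- A 3×3 normal tropical real matrix A satisfies A = A^⊙2 if and only if the six inequalities a_{23} + a_{31} ≤ a_{21}, a_{32} + a_{21} ≤ a_{31}, a_{13} + a_{32} ≤ a_{12}, a_{31} + a_{12} ≤ a_{32}, a_{12} + a_{23} ≤ a_{13}, a_{21} + a_{13} ≤ a_{23} all hold. -/
theorem stmt8 (A : Fin 3 → Fin 3 → ℝ) (hA : IsNormal A) :
    A = tmul A A ↔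
      (A 1 2 + A 2 0 ≤ A 1 0 ∧ A 2 1 + A 1 0 ≤ A 2 0 ∧
       A 0 2 + A 2 1 ≤ A 0 1 ∧ A 2 0 + A 0 1 ≤ A 2 1 ∧
       A 0 1 + A 1 2 ≤ A 0 2 ∧ A 1 0 + A 0 2 ≤ A 1 2) := by
  obtain ⟨hd, hle⟩ := hA
  have n01 := hle 0 1; have n02 := hle 0 2; have n10 := hle 1 0
  have n12 := hle 1 2; have n20 := hle 2 0; have n21 := hle 2 1
  constructor
  · intro h
    have h' : ∀ i j, A i j = max (A i 0 + A 0 j) (max (A i 1 + A 1 j) (A i 2 + A 2 j)) :=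
      fun i j => congrFun (congrFun h i) j
    have e10 := h' 1 0; have e20 := h' 2 0; have e01 := h' 0 1
    have e21 := h' 2 1; have e02 := h' 0 2; have e12 := h' 1 2
    simp [hd] at e10 e20 e01 e21 e02 e12
    exact ⟨e10, e20, e01, e21, e02, e12⟩
  · rintro ⟨h1, h2, h3, h4, h5, h6⟩
    funext i j
    fin_cases i <;> fin_cases j <;> simp [tmul, hd] <;>
      first
        | linarith
        | (constructor <;> linarith)
        | (apply le_antisymm <;> simp [le_max_iff, max_le_iff] <;> constructor <;> linarith)
end

section
/- For a 3×3 normal tropical real matrix A, the tropical adjoint equals A^⊙2, where Â_{ji} is the tropical cofactor of a_{ij} (the tropical 2×2 determinant, i.e., max of the two products, of the complementary minor). -/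
/-- The smaller of the two indices of `Fin 3` distinct from `j`. -/
def loIdx (j : Fin 3) : Fin 3 := if j = 0 then 1 else 0

/-- The larger of the two indices of `Fin 3` distinct from `j`. -/
def hiIdx (j : Fin 3) : Fin 3 := if j = 2 then 1 else 2

/-- Tropical adjoint: α_{ij} is the tropical 2×2 determinant of the minor of A
obtained by deleting row j and column i. -/
def tadj (A : Fin 3 → Fin 3 → ℝ) : Fin 3 → Fin 3 → ℝ :=
  fun i j => max (A (loIdx j) (loIdx i) + A (hiIdx j) (hiIdx i))
               (A (loIdx j) (hiIdx i) + A (hiIdx j) (loIdx i))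

theorem stmt11 (A : Fin 3 → Fin 3 → ℝ) (hA : IsNormal A) :
    tadj A = tmul A A := by
  obtain ⟨hd, hle⟩ := hA
  funext i j
  have f01 := hle 0 1; have f02 := hle 0 2; have f10 := hle 1 0
  have f12 := hle 1 2; have f20 := hle 2 0; have f21 := hle 2 1
  have d0 := hd 0; have d1 := hd 1; have d2 := hd 2
  fin_cases i <;> fin_cases j <;>
    · simp only [tadj, tmul, loIdx, hiIdx, Fin.mk_one, Fin.mk_zero, show ((⟨2, by norm_num⟩ : Fin 3) = 2) from rfl]
      simp only [show ((0:Fin 3) = 2) = False from by simp, show ((1:Fin 3) = 2) = False from by simp,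
        show ((2:Fin 3) = 0) = False from by simp, show ((1:Fin 3) = 0) = False from by simp,
        show ((0:Fin 3) = 0) = True from by simp, show ((2:Fin 3) = 2) = True from by simp,
        if_true, if_false]
      apply le_antisymm <;> (repeat' apply max_le) <;> simp only [le_max_iff] <;>
        first
        | linarith
        | (left; linarith)
        | (right; linarith)
        | (right; left; linarith)
        | (right; right; linarith)
end

section
/- If A = D(d, d₁, d₂, d₃) with d ≥ 0 and d_j ≥ −d for all j, and additionally d₁ < 0, then A ≠ A^⊙2; specifically (A^⊙2)_{32} = −2d − d₁ − d₂ > A_{32} = −2d − d₂. -/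
/-- The matrix D(d,d₁,d₂,d₃). -/
def Dmat (d d1 d2 d3 : ℝ) : Fin 3 → Fin 3 → ℝ :=
  ![![0, -d - d2, -2*d - d3], ![-2*d - d1, 0, -d - d3], ![-d - d1, -2*d - d2, 0]]

theorem stmt16 (d d1 d2 d3 : ℝ) (hd : 0 ≤ d)
    (h1 : -d ≤ d1) (h2 : -d ≤ d2) (h3 : -d ≤ d3) (hneg : d1 < 0) :
    Dmat d d1 d2 d3 ≠ tmul (Dmat d d1 d2 d3) (Dmat d d1 d2 d3) ∧
    tmul (Dmat d d1 d2 d3) (Dmat d d1 d2 d3) 2 1 = -2*d - d1 - d2 ∧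
    Dmat d d1 d2 d3 2 1 < tmul (Dmat d d1 d2 d3) (Dmat d d1 d2 d3) 2 1 := by
  have key : tmul (Dmat d d1 d2 d3) (Dmat d d1 d2 d3) 2 1 = -2*d - d1 - d2 := by
    simp only [tmul, Dmat]
    norm_num [Matrix.cons_val_zero, Matrix.cons_val_one, Matrix.cons_val_two, Matrix.tail_cons, Matrix.head_cons]
    have h : (-(2*d) - d2 : ℝ) ≤ -d - d1 + (-d - d2) := by linarith
    rw [sup_eq_left.mpr h]; ring
  have lt : Dmat d d1 d2 d3 2 1 < tmul (Dmat d d1 d2 d3) (Dmat d d1 d2 d3) 2 1 := by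
    rw [key]; simp only [Dmat]; norm_num [Matrix.cons_val_two, Matrix.tail_cons, Matrix.head_cons]; linarith
  exact ⟨fun h => absurd (congrFun (congrFun h 2) 1) (ne_of_lt lt), key, lt⟩
end
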